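/- Let Ω = ℂ, g₀ ≡ 1 and q ≡ 0. Then the Toda equation Toda(0,g) has no solution: there is no tuple of smooth functions (w₁,…,w_r) : ℂ → ℝ^r with Σᵢ wᵢ = 0 satisfying Δw₁ = −e^{−w₁+w₂}, Δwᵢ = e^{−w_{i−1}+wᵢ} − e^{−wᵢ+w_{i+1}} for 2 ≤ i ≤ r−1, and Δw_r = e^{−w_{r−1}+w_r}. -/

import Mathlib

/-- The operator `Δ = ∂_z ∂_z̄ = (1/4)(∂²/∂x² + ∂²/∂y²)` acting on functions `ℂ → ℝ`. -/
noncomputable def lap (f : ℂ → ℝ) (z : ℂ) : ℝ :=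
  (1 / 4) * (iteratedFDeriv ℝ 2 f z ![1, 1] + iteratedFDeriv ℝ 2 f z ![Complex.I, Complex.I])


open Real Filter
/-- Second derivative test (max version). -/
lemma secondDerivTest {g g1 : ℝ → ℝ} {c : ℝ} (hmax : IsLocalMax g 0)
    (hg : ∀ᶠ t in nhds 0, HasDerivAt g (g1 t) t) (hg1 : HasDerivAt g1 c 0) : c ≤ 0 := by
  by_contra hc
  push_neg at hc
  have h0 : g1 0 = 0 := hmax.hasDerivAt_eq_zero hg.self_of_nhds
  -- slope of g1 tends to c > 0
  have hslope := hasDerivAt_iff_tendsto_slope.1 hg1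
  have hpos : ∀ᶠ t in nhdsWithin 0 (Set.Ioi 0), 0 < g1 t := by
    have h2 : ∀ᶠ t in nhdsWithin (0:ℝ) {(0:ℝ)}ᶜ, 0 < slope g1 0 t :=
      hslope.eventually (eventually_gt_nhds hc)
    have h3 : ∀ᶠ t in nhdsWithin (0:ℝ) (Set.Ioi 0), 0 < slope g1 0 t :=
      h2.filter_mono (nhdsWithin_mono _ (by intro x hx; exact ne_of_gt hx))
    filter_upwards [h3, self_mem_nhdsWithin] with t ht ht'
    rw [slope_def_field, h0, sub_zero, sub_zero] at ht
    have := mul_pos ht (Set.mem_Ioi.1 ht')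
    rwa [div_mul_cancel₀] at this
    exact ne_of_gt ht'
  rw [eventually_nhdsWithin_iff, Metric.eventually_nhds_iff] at hpos
  obtain ⟨ε1, hε1, hP⟩ := hpos
  rw [Metric.eventually_nhds_iff] at hg
  obtain ⟨ε2, hε2, hD⟩ := hg
  have hmax' := hmax
  rw [IsLocalMax, IsMaxFilter, Metric.eventually_nhds_iff] at hmax'
  obtain ⟨ε3, hε3, hM⟩ := hmax'
  set t0 : ℝ := min (min ε1 ε2) ε3 / 2 with ht0
  have hm : 0 < min (min ε1 ε2) ε3 := lt_min (lt_min hε1 hε2) hε3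
  have ht0pos : 0 < t0 := by positivity
  have ht01 : t0 < ε1 := by
    have : t0 < min (min ε1 ε2) ε3 := half_lt_self hm
    exact lt_of_lt_of_le this (le_trans (min_le_left _ _) (min_le_left _ _))
  have ht02 : t0 < ε2 := by
    have : t0 < min (min ε1 ε2) ε3 := half_lt_self hm
    exact lt_of_lt_of_le this (le_trans (min_le_left _ _) (min_le_right _ _))
  have ht03 : t0 < ε3 := by
    have : t0 < min (min ε1 ε2) ε3 := half_lt_self hm
    exact lt_of_lt_of_le this (min_le_right _ _)
  have hmono : StrictMonoOn g (Set.Icc 0 t0) := by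
    apply strictMonoOn_of_deriv_pos (convex_Icc _ _)
    · apply ContinuousOn.mono (s := Set.Icc (-t0) t0)
      · intro x hx
        have hxd : dist x (0:ℝ) < ε2 := by
          rw [Real.dist_eq, sub_zero]
          exact lt_of_le_of_lt (abs_le.2 ⟨hx.1, hx.2⟩) ht02
        exact ((hD hxd).continuousAt).continuousWithinAt
      · intro x hx; exact ⟨le_trans (by linarith) hx.1, hx.2⟩
    · intro x hx
      rw [interior_Icc] at hx
      have hxd : dist x (0:ℝ) < ε2 := by
        rw [Real.dist_eq, sub_zero, abs_of_pos hx.1]; linarith [hx.2]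
      rw [(hD hxd).deriv]
      apply hP
      · rw [Real.dist_eq, sub_zero, abs_of_pos hx.1]; linarith [hx.2]
      · exact hx.1
  have : g 0 < g t0 := hmono ⟨le_refl 0, le_of_lt ht0pos⟩ ⟨le_of_lt ht0pos, le_refl t0⟩ ht0pos
  have : g t0 ≤ g 0 := hM (by rw [Real.dist_eq, sub_zero, abs_of_pos ht0pos]; exact ht03)
  linarith


/-- first derivative along a line -/
lemma hasDerivAt_line {f : ℂ → ℝ} (hf : ContDiff ℝ (⊤ : ℕ∞) f) (z v : ℂ) (t : ℝ) :
    HasDerivAt (fun s : ℝ => f (z + s • v)) (fderiv ℝ f (z + t • v) v) t := by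
  have hL : HasDerivAt (fun s : ℝ => z + s • v) v t := by
    simpa using ((hasDerivAt_id t).smul_const v).const_add z
  have hfd : HasFDerivAt f (fderiv ℝ f (z + t • v)) (z + t • v) :=
    (hf.differentiable (by simp) (z + t • v)).hasFDerivAt
  exact hfd.comp_hasDerivAt t hL

/-- second derivative along a line at 0 -/
lemma hasDerivAt_line2 {f : ℂ → ℝ} (hf : ContDiff ℝ (⊤ : ℕ∞) f) (z v : ℂ) :
    HasDerivAt (fun s : ℝ => fderiv ℝ f (z + s • v) v)
      (iteratedFDeriv ℝ 2 f z ![v, v]) 0 := by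
  have hL : HasDerivAt (fun s : ℝ => z + s • v) v 0 := by
    simpa using ((hasDerivAt_id (0:ℝ)).smul_const v).const_add z
  have hdf : Differentiable ℝ (fderiv ℝ f) := by
    have : ContDiff ℝ (⊤ : ℕ∞) (fderiv ℝ f) := (contDiff_infty_iff_fderiv.1 hf).2
    exact this.differentiable (by simp)
  have h1 : HasFDerivAt (fderiv ℝ f) (fderiv ℝ (fderiv ℝ f) (z + (0:ℝ) • v)) (z + (0:ℝ) • v) :=
    (hdf _).hasFDerivAt
  have h2 : HasDerivAt (fun s : ℝ => fderiv ℝ f (z + s • v))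
      (fderiv ℝ (fderiv ℝ f) (z + (0:ℝ) • v) v) 0 := h1.comp_hasDerivAt 0 hL
  have h3 : HasDerivAt (fun s : ℝ => (fun s : ℝ => fderiv ℝ f (z + s • v)) s v)
      ((fderiv ℝ (fderiv ℝ f) (z + (0:ℝ) • v) v) v + (fderiv ℝ f (z + (0:ℝ) • v)) 0) 0 :=
    h2.clm_apply (hasDerivAt_const _ _)
  have e : iteratedFDeriv ℝ 2 f z ![v, v] = fderiv ℝ (fderiv ℝ f) z v v := by
    rw [iteratedFDeriv_two_apply]; rfl
  simpa [e] using h3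

section laplin
lemma lap_add {f g : ℂ → ℝ} (hf : ContDiff ℝ (⊤ : ℕ∞) f) (hg : ContDiff ℝ (⊤ : ℕ∞) g) (z : ℂ) :
    lap (fun w => f w + g w) z = lap f z + lap g z := by
  have h1 : (fun w => f w + g w) = f + g := rfl
  unfold lap
  rw [h1, iteratedFDeriv_add_apply (hf.of_le (WithTop.coe_le_coe.2 le_top)).contDiffAt (hg.of_le (WithTop.coe_le_coe.2 le_top)).contDiffAt]
  simp; ring

lemma lap_smul (c : ℝ) {f : ℂ → ℝ} (hf : ContDiff ℝ (⊤ : ℕ∞) f) (z : ℂ) :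
    lap (fun w => c * f w) z = c * lap f z := by
  have h1 : (fun w => c * f w) = c • f := rfl
  unfold lap
  rw [h1, iteratedFDeriv_const_smul_apply (hf.of_le (WithTop.coe_le_coe.2 le_top)).contDiffAt]
  simp; ring

lemma lap_const (c : ℝ) (z : ℂ) : lap (fun _ => c) z = 0 := by
  unfold lap
  rw [iteratedFDeriv_const_of_ne (by norm_num)]
  simp

lemma lap_add_const {f : ℂ → ℝ} (hf : ContDiff ℝ (⊤ : ℕ∞) f) (c : ℝ) (z : ℂ) :
    lap (fun w => f w + c) z = lap f z := by
  rw [lap_add hf contDiff_const z, lap_const]; ring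

lemma lap_sum {ι : Type*} (s : Finset ι) (f : ι → ℂ → ℝ)
    (hf : ∀ i ∈ s, ContDiff ℝ (⊤ : ℕ∞) (f i)) (z : ℂ) :
    lap (fun w => ∑ i ∈ s, f i w) z = ∑ i ∈ s, lap (f i) z := by
  classical
  induction s using Finset.induction_on with
  | empty => simpa using lap_const 0 z
  | @insert a s' hx ih =>
    rw [Finset.sum_insert hx]
    have : (fun w => ∑ i ∈ insert a s', f i w) = fun w => f a w + ∑ i ∈ s', f i w := by
      funext w; rw [Finset.sum_insert hx]
    rw [this, lap_add (hf a (Finset.mem_insert_self a s'))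
      (ContDiff.sum fun i hi => hf i (Finset.mem_insert_of_mem hi)) z,
      ih fun i hi => hf i (Finset.mem_insert_of_mem hi)]
end laplin

lemma normSq_line (z0 v : ℂ) (hv : Complex.normSq v = 1) (t : ℝ) :
    Complex.normSq (z0 + t • v)
      = Complex.normSq z0 + 2*t*((z0 * (starRingEnd ℂ) v).re) + t^2 := by
  have hv' : v.re * v.re + v.im * v.im = 1 := by
    simpa [Complex.normSq_apply] using hv
  simp only [Complex.normSq_apply, Complex.add_re, Complex.add_im, Complex.smul_re,
    Complex.smul_im, Complex.mul_re, Complex.mul_im, Complex.conj_re, Complex.conj_im, smul_eq_mul]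
  ring_nf
  nlinarith [hv']

lemma dir_bound (u : ℂ → ℝ) (hu : ContDiff ℝ (⊤ : ℕ∞) u) (R : ℝ) (z0 v : ℂ)
    (hv : Complex.normSq v = 1) (hD : 0 < R^2 - Complex.normSq z0)
    (hmax : IsLocalMax
      (fun t : ℝ => u (z0 + t • v) + 2 * Real.log (R^2 - Complex.normSq (z0 + t • v))) 0) :
    iteratedFDeriv ℝ 2 u z0 ![v, v]
      ≤ (4*(R^2 - Complex.normSq z0) + 8*((z0 * (starRingEnd ℂ) v).re)^2)
          / (R^2 - Complex.normSq z0)^2 := by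
  set b : ℝ := (z0 * (starRingEnd ℂ) v).re with hb
  set D0 : ℝ := R^2 - Complex.normSq z0 with hD0
  set P : ℝ → ℝ := fun t => D0 - 2*t*b - t^2 with hP
  have hPeq : ∀ t : ℝ, R^2 - Complex.normSq (z0 + t • v) = P t := by
    intro t; rw [normSq_line z0 v hv t, hP]; ring
  have hPderiv : ∀ t : ℝ, HasDerivAt P (-2*b - 2*t) t := by
    intro t
    have hform : P = fun s : ℝ => D0 - 2*(s*b) - s^2 := by funext s; rw [hP]; ring
    rw [hform]
    have h2 : HasDerivAt (fun s : ℝ => s^2) (2*t) t := by simpa using hasDerivAt_pow 2 t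
    have h3 := ((hasDerivAt_const t D0).sub (((hasDerivAt_id t).mul_const b).const_mul 2)).sub h2
    exact h3.congr_deriv (by ring)
  have hPcont : Continuous P := by fun_prop
  have hP0 : P 0 = D0 := by simp [hP]
  have hP0pos : 0 < P 0 := by rw [hP0]; exact hD
  -- eventually P t > 0
  have hePt : ∀ᶠ t in nhds (0:ℝ), 0 < P t :=
    (hPcont.continuousAt (x := 0)).eventually (eventually_gt_nhds hP0pos)
  -- the function and its derivative
  set g : ℝ → ℝ := fun t => u (z0 + t • v) + 2 * Real.log (R^2 - Complex.normSq (z0 + t • v))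
    with hg
  set g1 : ℝ → ℝ := fun t => fderiv ℝ u (z0 + t • v) v + (-4*b - 4*t) / P t with hg1
  have hgderiv : ∀ᶠ t in nhds (0:ℝ), HasDerivAt g (g1 t) t := by
    filter_upwards [hePt] with t hPt
    have h1 : HasDerivAt (fun s : ℝ => u (z0 + s • v)) (fderiv ℝ u (z0 + t • v) v) t :=
      hasDerivAt_line hu z0 v t
    have h2 : HasDerivAt (fun s : ℝ => Real.log (P s)) ((-2*b - 2*t) / P t) t :=
      (hPderiv t).log (ne_of_gt hPt)
    have h3 : HasDerivAt (fun s : ℝ => 2 * Real.log (P s)) (2 * ((-2*b - 2*t) / P t)) t :=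
      h2.const_mul 2
    have h4 : HasDerivAt (fun s : ℝ => u (z0 + s • v) + 2 * Real.log (P s))
        (fderiv ℝ u (z0 + t • v) v + 2 * ((-2*b - 2*t) / P t)) t := h1.add h3
    have he : g = fun s : ℝ => u (z0 + s • v) + 2 * Real.log (P s) := by
      funext s; rw [hg]; simp only [hPeq s]
    rw [he, hg1]
    convert h4 using 1
    ring
  -- derivative of g1 at 0
  have hg1deriv : HasDerivAt g1
      (iteratedFDeriv ℝ 2 u z0 ![v, v] + (-4*D0 + (-4*b)*(2*b)) / D0^2) 0 := by
    have h1 := hasDerivAt_line2 hu z0 v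
    have hnum : HasDerivAt (fun t : ℝ => -4*b - 4*t) (-4) 0 := by
      simpa using ((hasDerivAt_id (0:ℝ)).const_mul (4:ℝ)).const_sub (-4*b)
    have h2 : HasDerivAt (fun t : ℝ => (-4*b - 4*t) / P t)
        (((-4) * P 0 - (-4*b - 4*0) * (-2*b - 2*0)) / P 0 ^ 2) 0 :=
      hnum.div (hPderiv 0) (ne_of_gt hP0pos)
    have := h1.add h2
    rw [hg1]
    exact this.congr_deriv (by rw [hP0]; ring)
  have hfin := secondDerivTest hmax hgderiv hg1deriv
  have e : (-4*D0 + (-4*b)*(2*b)) / D0^2 = -((4*D0 + 8*b^2)/D0^2) := by ring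
  rw [e] at hfin
  linarith

lemma key_bound (u : ℂ → ℝ) (hu : ContDiff ℝ (⊤ : ℕ∞) u)
    (h : ∀ z, Real.exp (u z) ≤ lap u z) (R : ℝ) (hR : 0 < R) :
    Real.exp (u 0) ≤ 2 / R^2 := by
  set hfun : ℂ → ℝ := fun z => (R^2 - Complex.normSq z)^2 * Real.exp (u z) with hhfun
  have hcont : Continuous hfun :=
    ((continuous_const.sub Complex.continuous_normSq).pow 2).mul
      (Real.continuous_exp.comp (hu.continuous))
  obtain ⟨z0, hz0mem, hz0max⟩ :=
    (isCompact_closedBall (0:ℂ) R).exists_isMaxOn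
      ⟨0, Metric.mem_closedBall_self (le_of_lt hR)⟩ hcont.continuousOn
  have h0mem : (0:ℂ) ∈ Metric.closedBall (0:ℂ) R := Metric.mem_closedBall_self (le_of_lt hR)
  have hf0 : hfun 0 = R^4 * Real.exp (u 0) := by
    simp [hhfun]; ring
  have hf0pos : 0 < hfun 0 := by rw [hf0]; positivity
  have hle0 : hfun 0 ≤ hfun z0 := hz0max h0mem
  have hz0pos : 0 < hfun z0 := lt_of_lt_of_le hf0pos hle0
  have hnsq : ∀ z : ℂ, Complex.normSq z = ‖z‖^2 := by
    intro z; rw [← Complex.sq_norm]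
  -- z0 is interior
  have hns : Complex.normSq z0 ≤ R^2 := by
    have h1 := Metric.mem_closedBall.1 hz0mem
    rw [dist_zero_right] at h1
    rw [hnsq z0]
    nlinarith [norm_nonneg z0]
  have hD : 0 < R^2 - Complex.normSq z0 := by
    rcases lt_or_eq_of_le hns with h' | h'
    · linarith
    · exfalso
      have : hfun z0 = 0 := by rw [hhfun]; simp [h']
      linarith
  -- local max along each line
  have hlocmax : ∀ v : ℂ, Complex.normSq v = 1 → IsLocalMax
      (fun t : ℝ => u (z0 + t • v) + 2 * Real.log (R^2 - Complex.normSq (z0 + t • v))) 0 := by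
    intro v hv
    have hcontP : Continuous fun t : ℝ => R^2 - Complex.normSq (z0 + t • v) :=
      continuous_const.sub (Complex.continuous_normSq.comp (by fun_prop))
    have hePt : ∀ᶠ t in nhds (0:ℝ), 0 < R^2 - Complex.normSq (z0 + t • v) := by
      have h0 : (0:ℝ) < R^2 - Complex.normSq (z0 + (0:ℝ) • v) := by simpa using hD
      exact (hcontP.continuousAt (x := 0)).eventually (eventually_gt_nhds h0)
    filter_upwards [hePt] with t hPt
    have hmem : z0 + t • v ∈ Metric.closedBall (0:ℂ) R := by
      rw [Metric.mem_closedBall, dist_zero_right]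
      rw [hnsq (z0 + t • v)] at hPt
      nlinarith [norm_nonneg (z0 + t • v)]
    have hle : hfun (z0 + t • v) ≤ hfun z0 := hz0max hmem
    have hpos : 0 < hfun (z0 + t • v) := by
      rw [hhfun]
      have h2 : 0 < (R^2 - Complex.normSq (z0 + t • v))^2 := by positivity
      positivity
    have hloggen : ∀ z : ℂ, 0 < R^2 - Complex.normSq z →
        u z + 2 * Real.log (R^2 - Complex.normSq z) = Real.log (hfun z) := by
      intro z hz
      rw [hhfun]
      rw [Real.log_mul (by positivity) (Real.exp_ne_zero _), Real.log_exp, Real.log_pow]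
      push_cast
      ring
    have e1 := hloggen (z0 + t • v) hPt
    have e2 := hloggen z0 hD
    show u (z0 + t • v) + 2 * Real.log (R^2 - Complex.normSq (z0 + t • v))
        ≤ u (z0 + (0:ℝ) • v) + 2 * Real.log (R^2 - Complex.normSq (z0 + (0:ℝ) • v))
    calc u (z0 + t • v) + 2 * Real.log (R^2 - Complex.normSq (z0 + t • v))
        = Real.log (hfun (z0 + t • v)) := e1
      _ ≤ Real.log (hfun z0) := Real.log_le_log hpos hle
      _ = u (z0 + (0:ℝ) • v) + 2 * Real.log (R^2 - Complex.normSq (z0 + (0:ℝ) • v)) := by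
          simpa using e2.symm
  -- apply dir_bound in two directions
  have hb1 : ((z0 * (starRingEnd ℂ) 1).re) = z0.re := by simp
  have hbI : ((z0 * (starRingEnd ℂ) Complex.I).re) = z0.im := by
    simp [Complex.mul_re]
  have hd1 := dir_bound u hu R z0 1 (by simp) hD (hlocmax 1 (by simp))
  have hdI := dir_bound u hu R z0 Complex.I (by simp) hD (hlocmax Complex.I (by simp))
  rw [hb1] at hd1
  rw [hbI] at hdI
  -- lap bound
  have hlap : lap u z0 ≤ 2 * R^2 / (R^2 - Complex.normSq z0)^2 := by
    unfold lap
    have hsum : z0.re^2 + z0.im^2 = Complex.normSq z0 := by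
      rw [Complex.normSq_apply]; ring
    have hAB : (iteratedFDeriv ℝ 2 u z0) ![1, 1] + (iteratedFDeriv ℝ 2 u z0) ![Complex.I, Complex.I]
        ≤ (4*(R^2 - Complex.normSq z0) + 8*z0.re^2)/(R^2 - Complex.normSq z0)^2
          + (4*(R^2 - Complex.normSq z0) + 8*z0.im^2)/(R^2 - Complex.normSq z0)^2 :=
      add_le_add hd1 hdI
    have e : (4*(R^2 - Complex.normSq z0) + 8*z0.re^2)/(R^2 - Complex.normSq z0)^2
          + (4*(R^2 - Complex.normSq z0) + 8*z0.im^2)/(R^2 - Complex.normSq z0)^2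
        = (8*(R^2 - Complex.normSq z0) + 8*(z0.re^2 + z0.im^2))/(R^2 - Complex.normSq z0)^2 := by
      ring
    rw [e, hsum] at hAB
    have e2 : (8*(R^2 - Complex.normSq z0) + 8*Complex.normSq z0)/(R^2 - Complex.normSq z0)^2
        = 4 * (2 * R^2 / (R^2 - Complex.normSq z0)^2) := by ring
    rw [e2] at hAB
    linarith
  have hexp : Real.exp (u z0) ≤ 2 * R^2 / (R^2 - Complex.normSq z0)^2 := le_trans (h z0) hlap
  -- conclude
  have hfz0le : hfun z0 ≤ 2 * R^2 := by
    rw [hhfun]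
    have hD2 : 0 < (R^2 - Complex.normSq z0)^2 := by positivity
    calc (R^2 - Complex.normSq z0)^2 * Real.exp (u z0)
        ≤ (R^2 - Complex.normSq z0)^2 * (2 * R^2 / (R^2 - Complex.normSq z0)^2) :=
          mul_le_mul_of_nonneg_left hexp (le_of_lt hD2)
      _ = 2 * R^2 := by field_simp
  have hfinal : R^4 * Real.exp (u 0) ≤ 2 * R^2 := by rw [← hf0]; linarith
  rw [le_div_iff₀ (by positivity : (0:ℝ) < R^2)]
  nlinarith [hfinal, Real.exp_pos (u 0), mul_pos hR hR]

lemma no_entire (u : ℂ → ℝ) (hu : ContDiff ℝ (⊤ : ℕ∞) u)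
    (h : ∀ z, Real.exp (u z) ≤ lap u z) : False := by
  set R : ℝ := Real.sqrt (4 * Real.exp (-(u 0))) with hR
  have hRpos : 0 < R := Real.sqrt_pos.2 (by positivity)
  have hR2 : R^2 = 4 * Real.exp (-(u 0)) := Real.sq_sqrt (by positivity)
  have hkey := key_bound u hu h R hRpos
  rw [hR2, Real.exp_neg] at hkey
  have hE := Real.exp_pos (u 0)
  have h2 : 2/(4*(Real.exp (u 0))⁻¹) = Real.exp (u 0)/2 := by
    field_simp
    ring
  rw [h2] at hkey
  linarith

lemma lap_sub {f g : ℂ → ℝ} (hf : ContDiff ℝ (⊤ : ℕ∞) f) (hg : ContDiff ℝ (⊤ : ℕ∞) g) (z : ℂ) :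
    lap (fun w => f w - g w) z = lap f z - lap g z := by
  have e : (fun w => f w - g w) = fun w => f w + (-1) * g w := by funext w; ring
  rw [e, lap_add hf (contDiff_const.mul hg) z, lap_smul (-1) hg z]
  ring


/-- for `Ω = ℂ`, `g₀ ≡ 1` and `q ≡ 0`, the Toda equation `Toda(0,g)`
has no solution. -/
theorem toda_no_solution_plane_zero_differential (r : ℕ) (hr : 2 ≤ r) :
    ¬ ∃ w : ℕ → ℂ → ℝ,
      (∀ i, 1 ≤ i → i ≤ r → ContDiff ℝ (⊤ : ℕ∞) (w i)) ∧
      (∀ z : ℂ, ∑ i ∈ Finset.Icc 1 r, w i z = 0) ∧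
      (∀ z : ℂ, lap (w 1) z = -Real.exp (-(w 1 z) + w 2 z)) ∧
      (∀ i, 2 ≤ i → i ≤ r - 1 → ∀ z : ℂ,
        lap (w i) z =
          Real.exp (-(w (i - 1) z) + w i z) - Real.exp (-(w i z) + w (i + 1) z)) ∧
      (∀ z : ℂ, lap (w r) z = Real.exp (-(w (r - 1) z) + w r z)) := by
  rintro ⟨w, hw, _hsum, h1, hmid, hrq⟩
  set n : ℕ := r - 1 with hn
  have hn1 : 1 ≤ n := by omega
  have hnr : n + 1 = r := by omega
  -- the exponential quantities, with zero convention outside [1, r-1]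
  set aa : ℕ → ℂ → ℝ :=
    fun i z => if 1 ≤ i ∧ i ≤ r - 1 then Real.exp (w (i+1) z - w i z) else 0 with haa
  have haann : ∀ i z, 0 ≤ aa i z := by
    intro i z; rw [haa]; dsimp only; split
    · positivity
    · exact le_rfl
  have haa_pos : ∀ i z, 1 ≤ i → i ≤ r - 1 → aa i z = Real.exp (w (i+1) z - w i z) := by
    intro i z hi1 hi2; rw [haa]; dsimp only; rw [if_pos ⟨hi1, hi2⟩]
  have haa0 : ∀ z, aa 0 z = 0 := by
    intro z; rw [haa]; dsimp only; rw [if_neg]; omega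
  have haar : ∀ z, aa r z = 0 := by
    intro z; rw [haa]; dsimp only; rw [if_neg]; omega
  -- the Laplacians of the w i
  have lapw : ∀ i, 1 ≤ i → i ≤ r → ∀ z, lap (w i) z = aa (i-1) z - aa i z := by
    intro i hi1 hi2 z
    rcases Nat.lt_or_ge i 2 with hlt | hge
    · -- i = 1
      have hi : i = 1 := by omega
      subst hi
      rw [haa0, haa_pos 1 z le_rfl (by omega), h1 z]
      have e : -(w 1 z) + w 2 z = w (1+1) z - w 1 z := by norm_num; ring
      rw [e]; ring
    · rcases Nat.lt_or_ge i r with hlt' | hge'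
      · -- middle
        have hup : i ≤ r - 1 := by omega
        rw [hmid i hge hup z, haa_pos (i-1) z (by omega) (by omega), haa_pos i z (by omega) hup]
        have e1 : i - 1 + 1 = i := by omega
        rw [e1]
        have e2 : -(w (i-1) z) + w i z = w i z - w (i-1) z := by ring
        have e3 : -(w i z) + w (i+1) z = w (i+1) z - w i z := by ring
        rw [e2, e3]
      · -- i = r
        have hi : i = r := by omega
        subst hi
        rw [haar, haa_pos (i-1) z (by omega) (by omega), hrq z]
        have e1 : i - 1 + 1 = i := by omega
        rw [e1]
        have e2 : -(w (i-1) z) + w i z = w i z - w (i-1) z := by ring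
        rw [e2]; ring
  -- coefficients
  set c : ℕ → ℝ := fun j => (j:ℝ) * ((r:ℝ) - (j:ℝ)) with hc
  have hc0 : c 0 = 0 := by rw [hc]; norm_num
  have hcr : c r = 0 := by rw [hc]; norm_num
  have hcpos : ∀ j, 1 ≤ j → j ≤ r - 1 → 0 < c j := by
    intro j hj1 hj2
    rw [hc]
    have h1' : (1:ℝ) ≤ (j:ℝ) := by exact_mod_cast hj1
    have h2' : (j:ℝ) < (r:ℝ) := by exact_mod_cast (by omega : j < r)
    dsimp only
    nlinarith
  have hcoeff : ∀ k : ℕ, 2 * c (k+1) - c (k+2) - c k = 2 := by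
    intro k; rw [hc]; dsimp only; push_cast; ring
  -- the combined function
  set v : ℂ → ℝ := fun z => ∑ k ∈ Finset.range n, c (k+1) * (w (k+2) z - w (k+1) z) with hv
  have hwk : ∀ k, k ∈ Finset.range n → ContDiff ℝ (⊤ : ℕ∞)
      (fun z => c (k+1) * (w (k+2) z - w (k+1) z)) := by
    intro k hk
    rw [Finset.mem_range] at hk
    exact contDiff_const.mul ((hw (k+2) (by omega) (by omega)).sub (hw (k+1) (by omega) (by omega)))
  have hvc : ContDiff ℝ (⊤ : ℕ∞) v := by
    rw [hv]; exact ContDiff.sum hwk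
  -- Laplacian of v
  have hlapv : ∀ z, lap v z = ∑ k ∈ Finset.range n, 2 * aa (k+1) z := by
    intro z
    have e1 : lap v z = ∑ k ∈ Finset.range n,
        c (k+1) * (lap (w (k+2)) z - lap (w (k+1)) z) := by
      rw [hv, lap_sum (Finset.range n) _ hwk z]
      apply Finset.sum_congr rfl
      intro k hk
      rw [Finset.mem_range] at hk
      rw [lap_smul (c (k+1)) ((hw (k+2) (by omega) (by omega)).sub (hw (k+1) (by omega)
        (by omega))) z, lap_sub (hw (k+2) (by omega) (by omega)) (hw (k+1) (by omega)
        (by omega)) z]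
    rw [e1]
    have e2 : ∀ k ∈ Finset.range n, c (k+1) * (lap (w (k+2)) z - lap (w (k+1)) z)
        = 2 * c (k+1) * aa (k+1) z - c (k+1) * aa (k+2) z - c (k+1) * aa k z := by
      intro k hk
      rw [Finset.mem_range] at hk
      rw [lapw (k+2) (by omega) (by omega) z, lapw (k+1) (by omega) (by omega) z]
      have e3 : k + 2 - 1 = k + 1 := by omega
      have e4 : k + 1 - 1 = k := by omega
      rw [e3, e4]
      ring
    rw [Finset.sum_congr rfl e2]
    obtain ⟨m, hm⟩ : ∃ m, n = m + 1 := ⟨n - 1, by omega⟩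
    have hshift1 : ∑ k ∈ Finset.range n, c (k+1) * aa k z
        = ∑ k ∈ Finset.range n, c (k+2) * aa (k+1) z := by
      rw [hm, Finset.sum_range_succ' (fun k => c (k+1) * aa k z) m,
        Finset.sum_range_succ (fun k => c (k+2) * aa (k+1) z) m]
      rw [haa0 z]
      have : c (m+2) = c r := by congr 1; omega
      rw [this, hcr]
      ring
    have hshift2 : ∑ k ∈ Finset.range n, c (k+1) * aa (k+2) z
        = ∑ k ∈ Finset.range n, c k * aa (k+1) z := by
      rw [hm, Finset.sum_range_succ (fun k => c (k+1) * aa (k+2) z) m,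
        Finset.sum_range_succ' (fun k => c k * aa (k+1) z) m]
      rw [hc0]
      have : aa (m+2) z = aa r z := by congr 1; omega
      rw [this, haar]
      ring
    rw [Finset.sum_sub_distrib, Finset.sum_sub_distrib, hshift1, hshift2,
      ← Finset.sum_sub_distrib, ← Finset.sum_sub_distrib]
    apply Finset.sum_congr rfl
    intro k _
    linear_combination (aa (k+1) z) * hcoeff k
  -- the normalizing constant
  set C : ℝ := ∑ k ∈ Finset.range n, c (k+1) with hC
  have hCpos : 0 < C := by
    rw [hC]
    apply Finset.sum_pos
    · intro k hk
      rw [Finset.mem_range] at hk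
      exact hcpos (k+1) (by omega) (by omega)
    · exact Finset.nonempty_range_iff.2 (by omega)
  -- the key pointwise inequality
  have hkey : ∀ z, Real.exp (v z / C) ≤ ∑ k ∈ Finset.range n, aa (k+1) z := by
    intro z
    have hex : ∃ k ∈ Finset.range n,
        0 ≤ c (k+1) * ((w (k+2) z - w (k+1) z) - v z / C) := by
      by_contra hcon
      push_neg at hcon
      have hlt : ∑ k ∈ Finset.range n, c (k+1) * ((w (k+2) z - w (k+1) z) - v z / C)
          < ∑ k ∈ Finset.range n, (0:ℝ) :=
        Finset.sum_lt_sum_of_nonempty (Finset.nonempty_range_iff.2 (by omega))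
          (fun k hk => hcon k hk)
      rw [Finset.sum_const, smul_zero] at hlt
      have heq : ∑ k ∈ Finset.range n, c (k+1) * ((w (k+2) z - w (k+1) z) - v z / C)
          = v z - C * (v z / C) := by
        rw [hv, hC, Finset.sum_mul, ← Finset.sum_sub_distrib]
        apply Finset.sum_congr rfl
        intro k _
        ring
      rw [heq, mul_div_cancel₀ (v z) (ne_of_gt hCpos)] at hlt
      simp at hlt
    obtain ⟨k0, hk0mem, hk0⟩ := hex
    have hk0n : k0 < n := Finset.mem_range.1 hk0mem
    have hcpos0 : 0 < c (k0+1) := hcpos (k0+1) (by omega) (by omega)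
    have hub : v z / C ≤ w (k0+2) z - w (k0+1) z := by nlinarith
    calc Real.exp (v z / C) ≤ Real.exp (w (k0+2) z - w (k0+1) z) := Real.exp_le_exp.2 hub
      _ = aa (k0+1) z := by
          rw [haa_pos (k0+1) z (by omega) (by omega)]
      _ ≤ ∑ k ∈ Finset.range n, aa (k+1) z :=
          Finset.single_le_sum (fun k _ => haann (k+1) z) hk0mem
  -- the final function
  set U : ℂ → ℝ := fun z => (1/C) * v z + Real.log (2 / C) with hU
  have hUc : ContDiff ℝ (⊤ : ℕ∞) U := by
    rw [hU]; exact (contDiff_const.mul hvc).add contDiff_const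
  have hfinal : ∀ z, Real.exp (U z) ≤ lap U z := by
    intro z
    have hlapU : lap U z = (1/C) * lap v z := by
      rw [hU, lap_add_const (contDiff_const.mul hvc) (Real.log (2/C)) z,
        lap_smul (1/C) hvc z]
    have hexpU : Real.exp (U z) = (2/C) * Real.exp (v z / C) := by
      rw [hU]
      dsimp only
      rw [Real.exp_add, Real.exp_log (by positivity)]
      rw [one_div, inv_mul_eq_div]
      ring
    rw [hexpU, hlapU, hlapv z]
    have e : ∑ k ∈ Finset.range n, 2 * aa (k+1) z
        = 2 * ∑ k ∈ Finset.range n, aa (k+1) z := by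
      rw [Finset.mul_sum]
    rw [e]
    have h2C : 0 < 2 / C := by positivity
    calc (2/C) * Real.exp (v z / C) ≤ (2/C) * ∑ k ∈ Finset.range n, aa (k+1) z :=
          mul_le_mul_of_nonneg_left (hkey z) (le_of_lt h2C)
      _ = (1/C) * (2 * ∑ k ∈ Finset.range n, aa (k+1) z) := by ring
  exact no_entire U hUc hfinal
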